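/- Let φ be a differentiable σ-almost convex function on a real inner product space with finite infimum φ*, let γ > σ, and for t = 1,…,T define F_t(w) = φ(w) + (γ/2)‖w − w_{t-1}‖² with exact minimizer w_t*, where w_0 is a fixed initial point and each random iterate w_t satisfies E[F_t(w_t) − F_t(w_t*)] ≤ ε. Then (1/T) Σ_{t=1}^T E‖w_{t-1} − w_t‖² ≤ 2(φ(w_0) − φ*)/(γT) + 2ε/γ. -/

import Mathlib

open MeasureTheory
open scoped RealInnerProductSpace

lemma tel_aux (a : ℕ → ℝ) : ∀ n : ℕ, ∑ x ∈ Finset.Icc 1 n, (a (x - 1) - a x) = a 0 - a n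
  | 0 => by simp
  | (k+1) => by
      rw [Finset.sum_Icc_succ_top (by omega), tel_aux a k]
      simp only [Nat.add_sub_cancel]
      ring

/-- For a differentiable, `σ`-almost convex `φ` with finite infimum `φ*`,
`γ > σ`, proximal subproblems `F_t(w) = φ(w) + (γ/2)‖w − w_{t-1}‖²` with exact
minimizers `w_t*`, and random iterates achieving expected suboptimality `ε` on each
subproblem, `(1/T) Σ_{t=1}^T E‖w_{t-1} − w_t‖² ≤ 2(φ(w_0) − φ*)/(γT) + 2ε/γ`. -/
theorem minibatch_prox_average_step_bound
    {E : Type*} [NormedAddCommGroup E] [InnerProductSpace ℝ E] [CompleteSpace E]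
    {Ω : Type*} [MeasureSpace Ω] [IsProbabilityMeasure (volume : Measure Ω)]
    (φ : E → ℝ) (φ' : E → E) (σ γ ε φstar : ℝ) (T : ℕ)
    (hT : 0 < T) (hσ : 0 ≤ σ) (hγ : σ < γ)
    (hdiff : ∀ x, HasGradientAt φ (φ' x) x)
    (halmost : ∀ w w', φ w - φ w' - ⟪φ' w', w - w'⟫ ≥ -(σ / 2) * ‖w - w'‖ ^ 2)
    (hinf : IsGLB (Set.range φ) φstar)
    (w0 : E) (w : ℕ → Ω → E) (wstar : ℕ → Ω → E)
    (hw0 : w 0 = fun _ => w0)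
    (hmin : ∀ t ∈ Finset.Icc 1 T, ∀ ω, ∀ x,
        φ (wstar t ω) + γ / 2 * ‖wstar t ω - w (t - 1) ω‖ ^ 2
          ≤ φ x + γ / 2 * ‖x - w (t - 1) ω‖ ^ 2)
    (hint_phi : ∀ t ∈ Finset.Icc 0 T, Integrable (fun ω => φ (w t ω)))
    (hint_dist : ∀ t ∈ Finset.Icc 1 T,
        Integrable (fun ω => ‖w (t - 1) ω - w t ω‖ ^ 2))
    (hint_sub : ∀ t ∈ Finset.Icc 1 T,
        Integrable (fun ω => φ (w t ω) + γ / 2 * ‖w t ω - w (t - 1) ω‖ ^ 2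
          - (φ (wstar t ω) + γ / 2 * ‖wstar t ω - w (t - 1) ω‖ ^ 2)))
    (hsub : ∀ t ∈ Finset.Icc 1 T,
        ∫ ω, (φ (w t ω) + γ / 2 * ‖w t ω - w (t - 1) ω‖ ^ 2
          - (φ (wstar t ω) + γ / 2 * ‖wstar t ω - w (t - 1) ω‖ ^ 2)) ≤ ε) :
    (T : ℝ)⁻¹ * ∑ t ∈ Finset.Icc 1 T, ∫ ω, ‖w (t - 1) ω - w t ω‖ ^ 2
      ≤ 2 * (φ w0 - φstar) / (γ * T) + 2 * ε / γ := by
  have hγ0 : 0 < γ := lt_of_le_of_lt hσ hγ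
  have hT0 : (0:ℝ) < (T:ℝ) := by exact_mod_cast hT
  set a : ℕ → ℝ := fun t => ∫ ω, φ (w t ω) with ha
  have key : ∀ t ∈ Finset.Icc 1 T,
      γ / 2 * ∫ ω, ‖w (t-1) ω - w t ω‖ ^ 2 ≤ a (t-1) - a t + ε := by
    intro t ht
    obtain ⟨ht1, htT⟩ := Finset.mem_Icc.mp ht
    have hintd := hint_dist t ht
    have hints := hint_sub t ht
    have hintp1 : Integrable (fun ω => φ (w (t-1) ω)) :=
      hint_phi (t-1) (Finset.mem_Icc.mpr ⟨Nat.zero_le _, by omega⟩)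
    have hintp : Integrable (fun ω => φ (w t ω)) :=
      hint_phi t (Finset.mem_Icc.mpr ⟨Nat.zero_le _, htT⟩)
    have hpt : ∀ ω, γ / 2 * ‖w (t-1) ω - w t ω‖ ^ 2 ≤
        (φ (w t ω) + γ / 2 * ‖w t ω - w (t-1) ω‖ ^ 2
          - (φ (wstar t ω) + γ / 2 * ‖wstar t ω - w (t-1) ω‖ ^ 2))
        + (φ (w (t-1) ω) - φ (w t ω)) := by
      intro ω
      have h1 := hmin t ht ω (w (t-1) ω)
      have hnr : ‖w (t-1) ω - w t ω‖ = ‖w t ω - w (t-1) ω‖ := norm_sub_rev _ _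
      rw [hnr]
      simp only [sub_self, norm_zero] at h1
      nlinarith [h1]
    have hg : Integrable (fun ω => φ (w (t-1) ω) - φ (w t ω)) := hintp1.sub hintp
    have hI : ∫ ω, γ / 2 * ‖w (t-1) ω - w t ω‖ ^ 2 ≤
        ∫ ω, ((φ (w t ω) + γ / 2 * ‖w t ω - w (t-1) ω‖ ^ 2
          - (φ (wstar t ω) + γ / 2 * ‖wstar t ω - w (t-1) ω‖ ^ 2))
        + (φ (w (t-1) ω) - φ (w t ω))) :=
      integral_mono (hintd.const_mul _) (hints.add hg) hpt
    rw [integral_const_mul, integral_add hints hg,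
      integral_sub hintp1 hintp] at hI
    have := hsub t ht
    simp only [ha]
    linarith
  have htel : ∑ t ∈ Finset.Icc 1 T, (a (t-1) - a t + ε)
      = (a 0 - a T) + T * ε := by
    rw [Finset.sum_add_distrib, Finset.sum_const, Nat.card_Icc]
    simp only [Nat.add_sub_cancel, nsmul_eq_mul]
    congr 1
    exact tel_aux a T
  have hsum : γ / 2 * ∑ t ∈ Finset.Icc 1 T, ∫ ω, ‖w (t-1) ω - w t ω‖ ^ 2
      ≤ (a 0 - a T) + T * ε := by
    rw [Finset.mul_sum, ← htel]
    exact Finset.sum_le_sum key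
  have ha0 : a 0 = φ w0 := by
    simp only [ha, hw0, integral_const, measure_univ, ENNReal.toReal_one, probReal_univ, smul_eq_mul, one_mul]
  have haT : φstar ≤ a T := by
    have hle : ∀ ω, φstar ≤ φ (w T ω) := fun ω => hinf.1 (Set.mem_range_self _)
    have : ∫ (_ : Ω), φstar ≤ a T :=
      integral_mono (integrable_const _) (hint_phi T (by simp)) hle
    simpa using this
  have hS : γ / 2 * ∑ t ∈ Finset.Icc 1 T, ∫ ω, ‖w (t-1) ω - w t ω‖ ^ 2
      ≤ (φ w0 - φstar) + T * ε := by
    rw [ha0] at hsum; linarith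
  have hrw : 2 * (φ w0 - φstar) / (γ * T) + 2 * ε / γ
      = (2 / (γ * T)) * ((φ w0 - φstar) + T * ε) := by
    field_simp
  rw [hrw]
  calc (T : ℝ)⁻¹ * ∑ t ∈ Finset.Icc 1 T, ∫ ω, ‖w (t-1) ω - w t ω‖ ^ 2
      = (2 / (γ * T)) * (γ / 2 * ∑ t ∈ Finset.Icc 1 T, ∫ ω, ‖w (t-1) ω - w t ω‖ ^ 2) := by
        field_simp
    _ ≤ (2 / (γ * T)) * ((φ w0 - φstar) + T * ε) :=
        mul_le_mul_of_nonneg_left hS (by positivity)
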